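/- arXiv:0712.2792 — 3 statements merged into one kernel-verified Lean document; each statement's English description precedes it below -/
import Mathlib

section
/- Let q be a fixed permutation pattern of length k, let n ≥ 2k−1, and let I_1 and I_2 be two sets of k positions in {1,…,n} with |I_1 ∩ I_2| = 1. Suppose that, if both I_1 and I_2 were to form occurrences of q, the common position would hold the a-th smallest entry among the positions of I_1 and the b-th smallest entry among the positions of I_2. Then the probability that, in a uniformly random permutation of length n, the entries in the positions of I_1 and the entries in the positions of I_2 both form occurrences of q equals (1/(2k−1)!)·C(a+b−2, a−1)·C(2k−a−b, k−a). -/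
open Finset Filter

/-- The entries of the permutation `p` (of length `n`) in the positions of the set `I`
form an occurrence of the pattern `q` (a permutation of length `k`): there is a strictly
increasing sequence of `k` positions, all belonging to `I`, on which the entries of `p`
are order-isomorphic to `q`.  When `I` has exactly `k` elements, the sequence is forced
to be the increasing enumeration `i₁ < i₂ < ⋯ < i_k` of `I`, so this says
`q j < q r ↔ p i_j < p i_r` for all `j, r`. -/
def occursIn {k n : ℕ} (q : Equiv.Perm (Fin k)) (p : Equiv.Perm (Fin n))
    (I : Finset (Fin n)) : Prop :=
  ∃ ι : Fin k → Fin n, (∀ a b : Fin k, a < b → ι a < ι b) ∧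
    (∀ j : Fin k, ι j ∈ I) ∧ (∀ j r : Fin k, q j < q r ↔ p (ι j) < p (ι r))

instance {k n : ℕ} (q : Equiv.Perm (Fin k)) (p : Equiv.Perm (Fin n)) (I : Finset (Fin n)) :
    Decidable (occursIn q p I) := by
  unfold occursIn; exact inferInstance



lemma filter_lt_eq_Iio {m : ℕ} (y : Fin m) :
    (univ : Finset (Fin m)).filter (· < y) = Finset.Iio y := by
  ext z; simp

lemma card_filter_lt_univ {m : ℕ} (y : Fin m) :
    ((univ : Finset (Fin m)).filter (· < y)).card = (y : ℕ) := by
  rw [filter_lt_eq_Iio, Fin.card_Iio]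

lemma rank_orderEmbOfFin {m k : ℕ} (V : Finset (Fin m)) (h : V.card = k) (i : Fin k) :
    (V.filter (· < V.orderEmbOfFin h i)).card = (i : ℕ) := by
  have hV : V.filter (· < V.orderEmbOfFin h i) = (Finset.Iio i).image (V.orderEmbOfFin h) := by
    ext w
    simp only [mem_filter, mem_image, Finset.mem_Iio]
    constructor
    · rintro ⟨hw, hlt⟩
      have : w ∈ Set.range (V.orderEmbOfFin h) := by
        rw [Finset.range_orderEmbOfFin]; exact hw
      obtain ⟨j, rfl⟩ := this
      exact ⟨j, (V.orderEmbOfFin h).strictMono.lt_iff_lt.mp hlt, rfl⟩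
    · rintro ⟨j, hj, rfl⟩
      exact ⟨Finset.orderEmbOfFin_mem V h j, (V.orderEmbOfFin h).strictMono hj⟩
  rw [hV, Finset.card_image_of_injective _ (V.orderEmbOfFin h).injective, Fin.card_Iio]

lemma orderEmbOfFin_eq_iff {m k : ℕ} (V : Finset (Fin m)) (h : V.card = k) (i : Fin k)
    (w : Fin m) : V.orderEmbOfFin h i = w ↔ w ∈ V ∧ (V.filter (· < w)).card = (i : ℕ) := by
  constructor
  · rintro rfl
    exact ⟨Finset.orderEmbOfFin_mem V h i, rank_orderEmbOfFin V h i⟩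
  · rintro ⟨hw, hc⟩
    have : w ∈ Set.range (V.orderEmbOfFin h) := by rw [Finset.range_orderEmbOfFin]; exact hw
    obtain ⟨j, rfl⟩ := this
    rw [rank_orderEmbOfFin V h j] at hc
    congr 1
    exact Fin.ext hc.symm

lemma pattern_forced {m k : ℕ} (q : Equiv.Perm (Fin k)) (g : Fin k → Fin m)
    (hq : ∀ j r, q j < q r ↔ g j < g r)
    (V : Finset (Fin m)) (hV : Finset.univ.image g = V) (hcard : V.card = k) :
    ∀ j, g j = V.orderEmbOfFin hcard (q j) := by
  have hmono : StrictMono (fun i => g (q.symm i)) := by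
    intro i i' hii
    refine (hq (q.symm i) (q.symm i')).mp ?_
    simpa using hii
  have hmem : ∀ i, g (q.symm i) ∈ V := by
    intro i; rw [← hV]; exact mem_image_of_mem g (mem_univ _)
  have := Finset.orderEmbOfFin_unique hcard hmem hmono
  intro j
  have h2 := congrFun this (q j)
  simpa using h2

lemma occursIn_iff {k n : ℕ} (q : Equiv.Perm (Fin k)) (p : Equiv.Perm (Fin n))
    (I : Finset (Fin n)) (h : I.card = k) :
    occursIn q p I ↔
      ∀ j r, q j < q r ↔ p (I.orderEmbOfFin h j) < p (I.orderEmbOfFin h r) := by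
  constructor
  · rintro ⟨ι, hmono, hmem, hpat⟩
    have : ι = I.orderEmbOfFin h :=
      Finset.orderEmbOfFin_unique h hmem (fun a b hab => hmono a b hab)
    rw [← this]; exact hpat
  · intro hpat
    exact ⟨I.orderEmbOfFin h, fun a b hab => (I.orderEmbOfFin h).strictMono hab,
      fun j => Finset.orderEmbOfFin_mem I h j, hpat⟩

def patt {n s' : ℕ} (J : Finset (Fin n)) (hJ : J.card = s') (p : Equiv.Perm (Fin n))
    (i : Fin s') : Fin s' :=
  ((J.image p).orderIsoOfFin
      (by rw [Finset.card_image_of_injective _ p.injective, hJ])).symm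
    ⟨p (J.orderEmbOfFin hJ i), Finset.mem_image_of_mem p (Finset.orderEmbOfFin_mem J hJ i)⟩

lemma patt_spec {n s' : ℕ} (J : Finset (Fin n)) (hJ : J.card = s') (p : Equiv.Perm (Fin n))
    (W : Finset (Fin n)) (hW : W.card = s') (hWeq : J.image p = W) (i : Fin s') :
    W.orderEmbOfFin hW (patt J hJ p i) = p (J.orderEmbOfFin hJ i) := by
  subst hWeq
  show ((J.image ⇑p).orderIsoOfFin hW (patt J hJ p i) : Fin n) = _
  unfold patt
  exact congrArg Subtype.val (((J.image ⇑p).orderIsoOfFin hW).apply_symm_apply _)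

lemma patt_injective {n s' : ℕ} (J : Finset (Fin n)) (hJ : J.card = s')
    (p : Equiv.Perm (Fin n)) : Function.Injective (patt J hJ p) := by
  intro i i' hii
  have h1 := patt_spec J hJ p (J.image p) (by rw [Finset.card_image_of_injective _ p.injective, hJ]) rfl i
  have h2 := patt_spec J hJ p (J.image p) (by rw [Finset.card_image_of_injective _ p.injective, hJ]) rfl i'
  rw [hii, h2] at h1
  exact (J.orderEmbOfFin hJ).injective (p.injective h1.symm)

lemma patt_lt_iff {n s' : ℕ} (J : Finset (Fin n)) (hJ : J.card = s') (p : Equiv.Perm (Fin n))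
    (i i' : Fin s') :
    patt J hJ p i < patt J hJ p i' ↔ p (J.orderEmbOfFin hJ i) < p (J.orderEmbOfFin hJ i') := by
  have hW : (J.image ⇑p).card = s' := by rw [Finset.card_image_of_injective _ p.injective, hJ]
  rw [← patt_spec J hJ p _ hW rfl i, ← patt_spec J hJ p _ hW rfl i']
  exact ((J.image ⇑p).orderEmbOfFin hW).strictMono.lt_iff_lt.symm

noncomputable def pattPerm {n s' : ℕ} (J : Finset (Fin n)) (hJ : J.card = s')
    (p : Equiv.Perm (Fin n)) : Equiv.Perm (Fin s') :=
  Equiv.ofBijective (patt J hJ p) (Finite.injective_iff_bijective.mp (patt_injective J hJ p))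

lemma pattPerm_apply {n s' : ℕ} (J : Finset (Fin n)) (hJ : J.card = s')
    (p : Equiv.Perm (Fin n)) (i : Fin s') : pattPerm J hJ p i = patt J hJ p i := rfl

def extJ {n s' : ℕ} (J : Finset (Fin n)) (hJ : J.card = s') (ρ : Equiv.Perm (Fin s')) :
    Equiv.Perm (Fin n) :=
  ρ.extendDomain (J.orderIsoOfFin hJ).toEquiv

lemma extJ_apply_emb {n s' : ℕ} (J : Finset (Fin n)) (hJ : J.card = s')
    (ρ : Equiv.Perm (Fin s')) (i : Fin s') :
    extJ J hJ ρ (J.orderEmbOfFin hJ i) = J.orderEmbOfFin hJ (ρ i) := by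
  have := Equiv.Perm.extendDomain_apply_image ρ (J.orderIsoOfFin hJ).toEquiv i
  simpa [extJ] using this

lemma extJ_mem {n s' : ℕ} (J : Finset (Fin n)) (hJ : J.card = s')
    (ρ : Equiv.Perm (Fin s')) {y : Fin n} (hy : y ∈ J) : extJ J hJ ρ y ∈ J := by
  have : y ∈ Set.range (J.orderEmbOfFin hJ) := by rw [Finset.range_orderEmbOfFin]; exact hy
  obtain ⟨i, rfl⟩ := this
  rw [extJ_apply_emb]
  exact Finset.orderEmbOfFin_mem J hJ (ρ i)

lemma image_extJ {n s' : ℕ} (J : Finset (Fin n)) (hJ : J.card = s')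
    (ρ : Equiv.Perm (Fin s')) : J.image (extJ J hJ ρ) = J := by
  apply Finset.eq_of_subset_of_card_le
  · intro y hy
    obtain ⟨z, hz, rfl⟩ := Finset.mem_image.mp hy
    exact extJ_mem J hJ ρ hz
  · rw [Finset.card_image_of_injective _ (extJ J hJ ρ).injective]

lemma pattPerm_mul {n s' : ℕ} (J : Finset (Fin n)) (hJ : J.card = s')
    (p : Equiv.Perm (Fin n)) (ρ : Equiv.Perm (Fin s')) :
    pattPerm J hJ (p * extJ J hJ ρ) = pattPerm J hJ p * ρ := by
  have hW : (J.image ⇑p).card = s' := by rw [Finset.card_image_of_injective _ p.injective, hJ]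
  have hWeq : J.image ⇑(p * extJ J hJ ρ) = J.image ⇑p := by
    show J.image (⇑p ∘ ⇑(extJ J hJ ρ)) = J.image ⇑p
    rw [← Finset.image_image, image_extJ]
  ext i
  show (patt J hJ (p * extJ J hJ ρ) i : ℕ) = (patt J hJ p (ρ i) : ℕ)
  have h1 := patt_spec J hJ (p * extJ J hJ ρ) (J.image ⇑p) hW hWeq i
  have h2 := patt_spec J hJ p (J.image ⇑p) hW rfl (ρ i)
  have h3 : (p * extJ J hJ ρ) (J.orderEmbOfFin hJ i) = p (J.orderEmbOfFin hJ (ρ i)) := by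
    show p (extJ J hJ ρ (J.orderEmbOfFin hJ i)) = _
    rw [extJ_apply_emb]
  rw [h3, ← h2] at h1
  exact congrArg Fin.val (((J.image ⇑p).orderEmbOfFin hW).injective h1)

lemma card_fiber_pattPerm {n s' : ℕ} (J : Finset (Fin n)) (hJ : J.card = s')
    (σ : Equiv.Perm (Fin s')) :
    (univ.filter fun p : Equiv.Perm (Fin n) => pattPerm J hJ p = σ).card
      = (univ.filter fun p : Equiv.Perm (Fin n) => pattPerm J hJ p = 1).card := by
  have hext : ∀ ρ ρ' : Equiv.Perm (Fin s'), extJ J hJ ρ * extJ J hJ ρ' = extJ J hJ (ρ * ρ') :=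
    fun ρ ρ' => Equiv.Perm.extendDomain_mul _ ρ ρ'
  have hone : extJ J hJ 1 = 1 := Equiv.Perm.extendDomain_one _
  refine Finset.card_nbij' (fun p => p * extJ J hJ σ⁻¹) (fun p => p * extJ J hJ σ)
    ?_ ?_ ?_ ?_
  · intro p hp
    simp only [Finset.mem_coe, mem_filter, mem_univ, true_and] at hp ⊢
    rw [pattPerm_mul, hp, mul_inv_cancel]
  · intro p hp
    simp only [Finset.mem_coe, mem_filter, mem_univ, true_and] at hp ⊢
    rw [pattPerm_mul, hp, one_mul]
  · intro p _
    show p * extJ J hJ σ⁻¹ * extJ J hJ σ = p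
    rw [mul_assoc, hext, inv_mul_cancel, hone, mul_one]
  · intro p _
    show p * extJ J hJ σ * extJ J hJ σ⁻¹ = p
    rw [mul_assoc, hext, mul_inv_cancel, hone, mul_one]

lemma orderEmbOfFin_congr {m k : ℕ} {V W : Finset (Fin m)} (h : V = W)
    (hV : V.card = k) (hW : W.card = k) (i : Fin k) :
    V.orderEmbOfFin hV i = W.orderEmbOfFin hW i := by subst h; rfl

lemma card_goodV {s' k α β : ℕ} (hα : α < k) (hs' : s' = 2 * k - 1)
    (v₀ : Fin s') (hv₀ : (v₀ : ℕ) = α + β) :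
    (univ.filter fun V : Finset (Fin s') =>
        V.card = k ∧ v₀ ∈ V ∧ (V.filter (· < v₀)).card = α).card
      = (α + β).choose α * (2 * k - 2 - α - β).choose (k - 1 - α) := by
  classical
  have key : (univ.filter fun V : Finset (Fin s') =>
        V.card = k ∧ v₀ ∈ V ∧ (V.filter (· < v₀)).card = α).card
      = ((Finset.Iio v₀).powersetCard α ×ˢ (Finset.Ioi v₀).powersetCard (k - 1 - α)).card := by
    refine Finset.card_nbij' (fun V => (V ∩ Finset.Iio v₀, V ∩ Finset.Ioi v₀))
      (fun ST => ST.1 ∪ insert v₀ ST.2) ?_ ?_ ?_ ?_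
    · intro V hV
      simp only [Finset.mem_coe, mem_filter, mem_univ, true_and] at hV
      obtain ⟨hVk, hv₀V, hVα⟩ := hV
      have hIio : V ∩ Finset.Iio v₀ = V.filter (· < v₀) := by
        ext z; simp [Finset.mem_Iio, and_comm]
      have hIoi : V ∩ Finset.Ioi v₀ = V.filter (v₀ < ·) := by
        ext z; simp [Finset.mem_Ioi, and_comm]
      have hnot : V.filter (fun z => ¬ z < v₀) = insert v₀ (V.filter (v₀ < ·)) := by
        ext z
        simp only [mem_filter, mem_insert, not_lt]
        constructor
        · rintro ⟨hz, hge⟩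
          rcases eq_or_lt_of_le hge with h | h
          · exact Or.inl h.symm
          · exact Or.inr ⟨hz, h⟩
        · rintro (rfl | ⟨hz, h⟩)
          · exact ⟨hv₀V, le_refl _⟩
          · exact ⟨hz, le_of_lt h⟩
      have hsum := Finset.card_filter_add_card_filter_not
        (s := V) (p := (· < v₀))
      rw [hVα, hnot, Finset.card_insert_of_notMem (by simp), hVk] at hsum
      simp only [Finset.mem_coe, Finset.mem_product, Finset.mem_powersetCard]
      refine ⟨⟨Finset.inter_subset_right, ?_⟩, ⟨Finset.inter_subset_right, ?_⟩⟩
      · rw [hIio, hVα]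
      · rw [hIoi]; omega
    · intro ST hST
      simp only [Finset.mem_coe, Finset.mem_product, Finset.mem_powersetCard] at hST
      obtain ⟨⟨hS, hSα⟩, ⟨hT, hTc⟩⟩ := hST
      have hv₀T : v₀ ∉ ST.2 := fun h => lt_irrefl v₀ (Finset.mem_Ioi.mp (hT h))
      have hdisj : Disjoint ST.1 (insert v₀ ST.2) := by
        rw [Finset.disjoint_insert_right]
        constructor
        · exact fun h => lt_irrefl v₀ (Finset.mem_Iio.mp (hS h))
        · rw [Finset.disjoint_left]
          intro z hzS hzT
          exact lt_asymm (Finset.mem_Iio.mp (hS hzS)) (Finset.mem_Ioi.mp (hT hzT))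
      simp only [Finset.mem_coe, mem_filter, mem_univ, true_and]
      refine ⟨?_, ?_, ?_⟩
      · rw [Finset.card_union_of_disjoint hdisj, Finset.card_insert_of_notMem hv₀T,
          hSα, hTc]
        omega
      · exact Finset.mem_union_right _ (Finset.mem_insert_self _ _)
      · have : (ST.1 ∪ insert v₀ ST.2).filter (· < v₀) = ST.1 := by
          ext z
          simp only [mem_filter, Finset.mem_union, mem_insert]
          constructor
          · rintro ⟨(h | rfl | h), hlt⟩
            · exact h
            · exact absurd hlt (lt_irrefl _)
            · exact absurd hlt (lt_asymm (Finset.mem_Ioi.mp (hT h)))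
          · intro h
            exact ⟨Or.inl h, Finset.mem_Iio.mp (hS h)⟩
        rw [this, hSα]
    · intro V hV
      simp only [Finset.mem_coe, mem_filter, mem_univ, true_and] at hV
      obtain ⟨hVk, hv₀V, hVα⟩ := hV
      ext z
      simp only [Finset.mem_union, Finset.mem_inter, mem_insert, Finset.mem_Iio,
        Finset.mem_Ioi]
      constructor
      · rintro (⟨h, _⟩ | rfl | ⟨h, _⟩) <;> first | exact h | exact hv₀V
      · intro hz
        rcases lt_trichotomy z v₀ with h | h | h
        · exact Or.inl ⟨hz, h⟩
        · exact Or.inr (Or.inl h)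
        · exact Or.inr (Or.inr ⟨hz, h⟩)
    · intro ST hST
      simp only [Finset.mem_coe, Finset.mem_product, Finset.mem_powersetCard] at hST
      obtain ⟨⟨hS, _⟩, ⟨hT, _⟩⟩ := hST
      have hv₀T : v₀ ∉ ST.2 := fun h => lt_irrefl v₀ (Finset.mem_Ioi.mp (hT h))
      have h1 : (ST.1 ∪ insert v₀ ST.2) ∩ Finset.Iio v₀ = ST.1 := by
        ext z
        simp only [Finset.mem_inter, Finset.mem_union, mem_insert, Finset.mem_Iio]
        constructor
        · rintro ⟨(h | rfl | h), hlt⟩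
          · exact h
          · exact absurd hlt (lt_irrefl _)
          · exact absurd hlt (lt_asymm (Finset.mem_Ioi.mp (hT h)))
        · intro h
          exact ⟨Or.inl h, Finset.mem_Iio.mp (hS h)⟩
      have h2 : (ST.1 ∪ insert v₀ ST.2) ∩ Finset.Ioi v₀ = ST.2 := by
        ext z
        simp only [Finset.mem_inter, Finset.mem_union, mem_insert, Finset.mem_Ioi]
        constructor
        · rintro ⟨(h | rfl | h), hlt⟩
          · exact absurd hlt (lt_asymm (Finset.mem_Iio.mp (hS h)))
          · exact absurd hlt (lt_irrefl _)
          · exact h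
        · intro h
          exact ⟨Or.inr (Or.inr h), Finset.mem_Ioi.mp (hT h)⟩
      exact Prod.ext h1 h2
  rw [key, Finset.card_product, Finset.card_powersetCard, Finset.card_powersetCard,
    Fin.card_Iio, Fin.card_Ioi, hv₀]
  congr 2
  omega

lemma filter_compl_card {m : ℕ} (V : Finset (Fin m)) (y : Fin m) :
    (V.filter (· < y)).card + (Vᶜ.filter (· < y)).card = (y : ℕ) := by
  classical
  have hdisj : Disjoint (V.filter (· < y)) (Vᶜ.filter (· < y)) :=
    Finset.disjoint_filter_filter disjoint_compl_right
  rw [← Finset.card_union_of_disjoint hdisj, ← Finset.filter_union, Finset.union_compl]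
  exact card_filter_lt_univ y

lemma card_good {s' k : ℕ} (hk : 0 < k) (hs' : s' = 2 * k - 1)
    (q : Equiv.Perm (Fin k)) (u₁ u₂ : Fin k → Fin s')
    (hu₁ : Function.Injective u₁) (hu₂ : Function.Injective u₂)
    (hcov : ∀ x : Fin s', (∃ j, u₁ j = x) ∨ (∃ j, u₂ j = x))
    (m₁ m₂ : Fin k) (hc : u₁ m₁ = u₂ m₂)
    (hinter : ∀ j j', u₁ j = u₂ j' → j = m₁ ∧ j' = m₂) :
    (univ.filter fun σ : Equiv.Perm (Fin s') =>
        (∀ j r, q j < q r ↔ σ (u₁ j) < σ (u₁ r)) ∧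
        (∀ j r, q j < q r ↔ σ (u₂ j) < σ (u₂ r))).card
      = ((q m₁ : ℕ) + (q m₂ : ℕ)).choose (q m₁) *
        (2 * k - 2 - (q m₁ : ℕ) - (q m₂ : ℕ)).choose (k - 1 - (q m₁ : ℕ)) := by
  classical
  set α := ((q m₁ : ℕ)) with hα'
  set β := ((q m₂ : ℕ)) with hβ'
  have hαk : α < k := (q m₁).isLt
  have hβk : β < k := (q m₂).isLt
  have hαβ : α + β < s' := by omega
  set v₀ : Fin s' := ⟨α + β, hαβ⟩ with hv₀'
  rw [← card_goodV hαk hs' v₀ rfl]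
  -- auxiliary facts
  have himg_card : ∀ σ : Equiv.Perm (Fin s'),
      (univ.image fun j => σ (u₁ j)).card = k := by
    intro σ
    rw [Finset.card_image_of_injective _ (fun j r h => hu₁ (σ.injective h))]
    simp
  have himg_card₂ : ∀ σ : Equiv.Perm (Fin s'),
      (univ.image fun j => σ (u₂ j)).card = k := by
    intro σ
    rw [Finset.card_image_of_injective _ (fun j r h => hu₂ (σ.injective h))]
    simp
  -- analysis of a good permutation
  have analysis : ∀ σ : Equiv.Perm (Fin s'),
      (∀ j r, q j < q r ↔ σ (u₁ j) < σ (u₁ r)) →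
      (∀ j r, q j < q r ↔ σ (u₂ j) < σ (u₂ r)) →
      v₀ ∈ (univ.image fun j => σ (u₁ j)) ∧
      (((univ.image fun j => σ (u₁ j)).filter (· < v₀)).card = α) ∧
      insert v₀ (univ.image fun j => σ (u₁ j))ᶜ = (univ.image fun j => σ (u₂ j)) := by
    intro σ hR₁ hR₂
    set V₁ := (univ.image fun j => σ (u₁ j)) with hV₁'
    set V₂ := (univ.image fun j => σ (u₂ j)) with hV₂'
    have spec₁ := pattern_forced q (fun j => σ (u₁ j)) hR₁ V₁ rfl (himg_card σ)
    have spec₂ := pattern_forced q (fun j => σ (u₂ j)) hR₂ V₂ rfl (himg_card₂ σ)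
    set c := σ (u₁ m₁) with hcdef
    have hrank₁ : (V₁.filter (· < c)).card = α := by
      rw [hcdef, spec₁ m₁]; exact rank_orderEmbOfFin _ _ _
    have hrank₂ : (V₂.filter (· < c)).card = β := by
      rw [hcdef, hc, spec₂ m₂]; exact rank_orderEmbOfFin _ _ _
    have hcV₁ : c ∈ V₁ := Finset.mem_image_of_mem _ (mem_univ m₁)
    have hV₂eq : V₂ = insert c V₁ᶜ := by
      ext y
      simp only [hV₂', hV₁', Finset.mem_image, mem_univ, true_and, mem_insert,
        Finset.mem_compl]
      constructor
      · rintro ⟨j, rfl⟩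
        by_cases hy : ∃ j', σ (u₁ j') = σ (u₂ j)
        · obtain ⟨j', hj'⟩ := hy
          obtain ⟨e1, e2⟩ := hinter j' j (σ.injective hj')
          subst e1; subst e2
          exact Or.inl (congrArg σ hc.symm)
        · exact Or.inr (by simpa using hy)
      · rintro (rfl | hy)
        · exact ⟨m₂, congrArg σ hc.symm⟩
        · obtain ⟨z, rfl⟩ := σ.surjective y
          rcases hcov z with ⟨j, rfl⟩ | ⟨j, rfl⟩
          · exact absurd (⟨j, rfl⟩ : ∃ j', σ (u₁ j') = σ (u₁ j)) (by simpa using hy)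
          · exact ⟨j, rfl⟩
    have hcval : (c : ℕ) = α + β := by
      have hsplit := filter_compl_card V₁ c
      have : (V₁ᶜ.filter (· < c)).card = β := by
        have : V₂.filter (· < c) = V₁ᶜ.filter (· < c) := by
          rw [hV₂eq, Finset.filter_insert, if_neg (lt_irrefl c)]
        rw [this] at hrank₂
        exact hrank₂
      omega
    have hcv₀ : c = v₀ := Fin.ext hcval
    refine ⟨hcv₀ ▸ hcV₁, by rw [← hcv₀]; exact hrank₁, by rw [← hcv₀, ← hV₂eq]⟩
  -- cardinality of the complement-insert set
  have hWcard : ∀ V : Finset (Fin s'), V.card = k → v₀ ∈ V → (insert v₀ Vᶜ).card = k := by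
    intro V hVk hv₀V
    rw [Finset.card_insert_of_notMem (by simp [hv₀V]), Finset.card_compl, hVk]
    simp only [Fintype.card_fin]
    omega
  -- construction of a good permutation from a good set
  have build : ∀ (V : Finset (Fin s'))
      (h : V.card = k ∧ v₀ ∈ V ∧ (V.filter (· < v₀)).card = α),
      ∃ σ : Equiv.Perm (Fin s'),
        (∀ j, σ (u₁ j) = V.orderEmbOfFin h.1 (q j)) ∧
        (∀ j, σ (u₂ j) = (insert v₀ Vᶜ).orderEmbOfFin (hWcard V h.1 h.2.1) (q j)) := by
    intro V h
    set W := insert v₀ Vᶜ with hW'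
    set g₁ : Fin k → Fin s' := fun j => V.orderEmbOfFin h.1 (q j) with hg₁'
    set g₂ : Fin k → Fin s' := fun j => W.orderEmbOfFin (hWcard V h.1 h.2.1) (q j) with hg₂'
    have hg₁inj : Function.Injective g₁ :=
      fun j r hjr => q.injective ((V.orderEmbOfFin h.1).injective hjr)
    have hg₂inj : Function.Injective g₂ :=
      fun j r hjr => q.injective ((W.orderEmbOfFin _).injective hjr)
    have hg₁m₁ : g₁ m₁ = v₀ := by
      rw [hg₁']
      exact (orderEmbOfFin_eq_iff V h.1 (q m₁) v₀).mpr ⟨h.2.1, h.2.2⟩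
    have hg₂m₂ : g₂ m₂ = v₀ := by
      rw [hg₂']
      refine (orderEmbOfFin_eq_iff W _ (q m₂) v₀).mpr ⟨Finset.mem_insert_self _ _, ?_⟩
      have h1 : W.filter (· < v₀) = Vᶜ.filter (· < v₀) := by
        rw [hW', Finset.filter_insert, if_neg (lt_irrefl v₀)]
      have h2 := filter_compl_card V v₀
      rw [h1]
      have : (v₀ : ℕ) = α + β := rfl
      omega
    have hg₁memV : ∀ j, g₁ j ∈ V := fun j => Finset.orderEmbOfFin_mem _ _ _
    have hg₂memW : ∀ j, g₂ j ∈ W := fun j => Finset.orderEmbOfFin_mem _ _ _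
    set f : Fin s' → Fin s' := fun x =>
      if hx : ∃ j, u₁ j = x then g₁ hx.choose
      else g₂ ((hcov x).resolve_left hx).choose with hf'
    have hfu₁ : ∀ j, f (u₁ j) = g₁ j := by
      intro j
      have hx : ∃ j', u₁ j' = u₁ j := ⟨j, rfl⟩
      rw [hf']
      simp only [dif_pos hx]
      exact congrArg g₁ (hu₁ hx.choose_spec)
    have hfu₂ : ∀ j, f (u₂ j) = g₂ j := by
      intro j
      by_cases hx : ∃ j', u₁ j' = u₂ j
      · obtain ⟨e1, e2⟩ := hinter _ _ hx.choose_spec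
        rw [hf']
        simp only [dif_pos hx]
        rw [e1, hg₁m₁, e2, hg₂m₂]
      · rw [hf']
        simp only [dif_neg hx]
        exact congrArg g₂ (hu₂ ((hcov (u₂ j)).resolve_left hx).choose_spec)
    -- injectivity of f
    have hVW : ∀ y : Fin s', y ∈ V → y ∈ W → y = v₀ := by
      intro y hyV hyW
      rcases Finset.mem_insert.mp hyW with h' | h'
      · exact h'
      · exact absurd hyV (Finset.mem_compl.mp h')
    have hfinj : Function.Injective f := by
      intro x y hxy
      have repx := hcov x
      have repy := hcov y
      rcases repx with ⟨j, rfl⟩ | ⟨j, rfl⟩ <;> rcases repy with ⟨r, rfl⟩ | ⟨r, rfl⟩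
      · rw [hfu₁, hfu₁] at hxy; exact congrArg u₁ (hg₁inj hxy)
      · rw [hfu₁, hfu₂] at hxy
        have hv : g₁ j = v₀ := hVW _ (hg₁memV j) (hxy ▸ hg₂memW r)
        have hv' : g₂ r = v₀ := hxy ▸ hv
        rw [hg₁inj (hv.trans hg₁m₁.symm), hg₂inj (hv'.trans hg₂m₂.symm), hc]
      · rw [hfu₂, hfu₁] at hxy
        have hv : g₁ r = v₀ := hVW _ (hg₁memV r) (hxy ▸ hg₂memW j)
        have hv' : g₂ j = v₀ := hxy.symm ▸ hv
        rw [hg₁inj (hv.trans hg₁m₁.symm), hg₂inj (hv'.trans hg₂m₂.symm), hc]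
      · rw [hfu₂, hfu₂] at hxy; exact congrArg u₂ (hg₂inj hxy)
    refine ⟨Equiv.ofBijective f (Finite.injective_iff_bijective.mp hfinj), ?_, ?_⟩
    · intro j; exact hfu₁ j
    · intro j; exact hfu₂ j
  -- the bijection
  refine Finset.card_bij'
    (fun σ _ => univ.image fun j => σ (u₁ j))
    (fun V hV => (build V (by simpa using (Finset.mem_filter.mp hV).2)).choose)
    ?_ ?_ ?_ ?_
  · intro σ hσ
    obtain ⟨hR₁, hR₂⟩ := (Finset.mem_filter.mp hσ).2
    obtain ⟨hmem, hcard, _⟩ := analysis σ hR₁ hR₂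
    exact Finset.mem_filter.mpr ⟨mem_univ _, himg_card σ, hmem, hcard⟩
  · intro V hV
    obtain ⟨hspec₁, hspec₂⟩ := (build V (by simpa using (Finset.mem_filter.mp hV).2)).choose_spec
    refine Finset.mem_filter.mpr ⟨mem_univ _, ?_, ?_⟩
    · intro j r
      rw [hspec₁ j, hspec₁ r]
      exact ((V.orderEmbOfFin _).strictMono.lt_iff_lt.symm).trans
        (by constructor <;> intro h' <;> exact h')
    · intro j r
      rw [hspec₂ j, hspec₂ r]
      exact (((insert v₀ Vᶜ).orderEmbOfFin _).strictMono.lt_iff_lt.symm).trans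
        (by constructor <;> intro h' <;> exact h')
  · intro σ hσ
    obtain ⟨hR₁, hR₂⟩ := (Finset.mem_filter.mp hσ).2
    set V₁ := (univ.image fun j => σ (u₁ j)) with hV₁'
    obtain ⟨hmem, hcard, hins⟩ := analysis σ hR₁ hR₂
    obtain ⟨hspec₁, hspec₂⟩ := (build V₁ ⟨himg_card σ, hmem, hcard⟩).choose_spec
    set τ := (build V₁ ⟨himg_card σ, hmem, hcard⟩).choose with hτ'
    have spec₁σ := pattern_forced q (fun j => σ (u₁ j)) hR₁ V₁ rfl (himg_card σ)
    have spec₂σ := pattern_forced q (fun j => σ (u₂ j)) hR₂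
      (univ.image fun j => σ (u₂ j)) rfl (himg_card₂ σ)
    apply Equiv.ext
    intro z
    rcases hcov z with ⟨j, rfl⟩ | ⟨j, rfl⟩
    · rw [hspec₁ j, spec₁σ j]
    · rw [hspec₂ j, spec₂σ j]
      exact orderEmbOfFin_congr hins _ _ _
  · intro V hV
    obtain ⟨hVk, hv₀V, hVα⟩ : V.card = k ∧ v₀ ∈ V ∧ (V.filter (· < v₀)).card = α := by
      simpa using (Finset.mem_filter.mp hV).2
    obtain ⟨hspec₁, _⟩ := (build V (by simpa using (Finset.mem_filter.mp hV).2)).choose_spec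
    ext y
    simp only [Finset.mem_image, mem_univ, true_and]
    constructor
    · rintro ⟨j, rfl⟩
      rw [hspec₁ j]
      exact Finset.orderEmbOfFin_mem _ _ _
    · intro hy
      have : y ∈ Set.range (V.orderEmbOfFin hVk) := by
        rw [Finset.range_orderEmbOfFin]; exact hy
      obtain ⟨i, rfl⟩ := this
      refine ⟨q.symm i, ?_⟩
      rw [hspec₁ (q.symm i)]
      have : V.orderEmbOfFin hVk = V.orderEmbOfFin ((fun h => h.1)
        (⟨hVk, hv₀V, hVα⟩ : V.card = k ∧ v₀ ∈ V ∧ (V.filter (· < v₀)).card = α)) := rfl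
      simp

/-- Let `q` be a pattern of length `k`, let `n ≥ 2k - 1`, and let `I₁`, `I₂` be two sets
of `k` positions with `I₁ ∩ I₂ = {x}`.  Suppose `x` is the `m₁`-th smallest position of
`I₁` and the `m₂`-th smallest position of `I₂` (via the increasing enumerations
`orderIsoOfFin`), and that in an occurrence of `q` the position `x` would hold the
`a`-th smallest entry of `I₁` (i.e. `q m₁ = a`, one-indexed) and the `b`-th smallest
entry of `I₂` (i.e. `q m₂ = b`, one-indexed).  Then the probability that, in a uniformly
random permutation of length `n`, the entries in the positions of `I₁` and those in the
positions of `I₂` both form occurrences of `q` equals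
`(1/(2k-1)!) · C(a+b-2, a-1) · C(2k-a-b, k-a)`. -/
theorem prob_both_occurrences_overlap_one (k n : ℕ) (hn : 2 * k - 1 ≤ n)
    (q : Equiv.Perm (Fin k)) (I₁ I₂ : Finset (Fin n))
    (h₁ : I₁.card = k) (h₂ : I₂.card = k)
    (x : Fin n) (hx : I₁ ∩ I₂ = {x})
    (a b : ℕ) (m₁ m₂ : Fin k)
    (hm₁ : (I₁.orderIsoOfFin h₁ m₁ : Fin n) = x)
    (hm₂ : (I₂.orderIsoOfFin h₂ m₂ : Fin n) = x)
    (ha : (q m₁ : ℕ) + 1 = a) (hb : (q m₂ : ℕ) + 1 = b) :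
    ((univ.filter fun p : Equiv.Perm (Fin n) =>
        occursIn q p I₁ ∧ occursIn q p I₂).card : ℝ) / (n.factorial : ℝ)
      = (1 / ((2 * k - 1).factorial : ℝ)) *
          ((a + b - 2).choose (a - 1) : ℝ) * ((2 * k - a - b).choose (k - a) : ℝ) := by
  classical
  have hk : 0 < k := m₁.pos
  set α := ((q m₁ : ℕ)) with hα'
  set β := ((q m₂ : ℕ)) with hβ'
  have hαk : α < k := (q m₁).isLt
  have hβk : β < k := (q m₂).isLt
  -- the union of positions
  set J : Finset (Fin n) := I₁ ∪ I₂ with hJ'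
  have hxcard : (I₁ ∩ I₂).card = 1 := by rw [hx]; simp
  have hJ : J.card = 2 * k - 1 := by
    have h0 := Finset.card_union_add_card_inter I₁ I₂
    rw [hxcard, h₁, h₂, ← hJ'] at h0
    omega
  set embJ := J.orderEmbOfFin hJ with hembJ'
  -- positions of I₁ and I₂ inside J
  have hmem₁ : ∀ j, (I₁.orderEmbOfFin h₁ j : Fin n) ∈ J :=
    fun j => Finset.mem_union_left _ (Finset.orderEmbOfFin_mem _ _ _)
  have hmem₂ : ∀ j, (I₂.orderEmbOfFin h₂ j : Fin n) ∈ J :=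
    fun j => Finset.mem_union_right _ (Finset.orderEmbOfFin_mem _ _ _)
  set u₁ : Fin k → Fin (2 * k - 1) :=
    fun j => (J.orderIsoOfFin hJ).symm ⟨I₁.orderEmbOfFin h₁ j, hmem₁ j⟩ with hu₁'
  set u₂ : Fin k → Fin (2 * k - 1) :=
    fun j => (J.orderIsoOfFin hJ).symm ⟨I₂.orderEmbOfFin h₂ j, hmem₂ j⟩ with hu₂'
  have hembu₁ : ∀ j, embJ (u₁ j) = I₁.orderEmbOfFin h₁ j := by
    intro j
    show ((J.orderIsoOfFin hJ) ((J.orderIsoOfFin hJ).symm ⟨_, hmem₁ j⟩) : Fin n) = _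
    rw [OrderIso.apply_symm_apply]
  have hembu₂ : ∀ j, embJ (u₂ j) = I₂.orderEmbOfFin h₂ j := by
    intro j
    show ((J.orderIsoOfFin hJ) ((J.orderIsoOfFin hJ).symm ⟨_, hmem₂ j⟩) : Fin n) = _
    rw [OrderIso.apply_symm_apply]
  have hu₁inj : Function.Injective u₁ := by
    intro j r hjr
    have : embJ (u₁ j) = embJ (u₁ r) := congrArg embJ hjr
    rw [hembu₁, hembu₁] at this
    exact (I₁.orderEmbOfFin h₁).injective this
  have hu₂inj : Function.Injective u₂ := by
    intro j r hjr
    have : embJ (u₂ j) = embJ (u₂ r) := congrArg embJ hjr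
    rw [hembu₂, hembu₂] at this
    exact (I₂.orderEmbOfFin h₂).injective this
  have hcov : ∀ z : Fin (2 * k - 1), (∃ j, u₁ j = z) ∨ (∃ j, u₂ j = z) := by
    intro z
    have hz : embJ z ∈ J := Finset.orderEmbOfFin_mem _ _ _
    rcases Finset.mem_union.mp hz with hz₁ | hz₂
    · have : embJ z ∈ Set.range (I₁.orderEmbOfFin h₁) := by
        rw [Finset.range_orderEmbOfFin]; exact hz₁
      obtain ⟨j, hj⟩ := this
      exact Or.inl ⟨j, embJ.injective (by rw [hembu₁ j, hj])⟩
    · have : embJ z ∈ Set.range (I₂.orderEmbOfFin h₂) := by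
        rw [Finset.range_orderEmbOfFin]; exact hz₂
      obtain ⟨j, hj⟩ := this
      exact Or.inr ⟨j, embJ.injective (by rw [hembu₂ j, hj])⟩
  have hm₁' : I₁.orderEmbOfFin h₁ m₁ = x := hm₁
  have hm₂' : I₂.orderEmbOfFin h₂ m₂ = x := hm₂
  have hcm : u₁ m₁ = u₂ m₂ := by
    apply embJ.injective
    rw [hembu₁, hembu₂, hm₁', hm₂']
  have hinter : ∀ j j', u₁ j = u₂ j' → j = m₁ ∧ j' = m₂ := by
    intro j j' hjj'
    have heq : I₁.orderEmbOfFin h₁ j = I₂.orderEmbOfFin h₂ j' := by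
      rw [← hembu₁ j, ← hembu₂ j', hjj']
    have hmem : I₁.orderEmbOfFin h₁ j ∈ I₁ ∩ I₂ :=
      Finset.mem_inter.mpr ⟨Finset.orderEmbOfFin_mem _ _ _,
        heq ▸ Finset.orderEmbOfFin_mem _ _ _⟩
    rw [hx, Finset.mem_singleton] at hmem
    constructor
    · exact (I₁.orderEmbOfFin h₁).injective (hmem.trans hm₁'.symm)
    · exact (I₂.orderEmbOfFin h₂).injective ((heq.symm.trans hmem).trans hm₂'.symm)
  -- translation of the event via patterns
  set F := pattPerm J hJ with hF'
  have hEcond : ∀ p : Equiv.Perm (Fin n),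
      (occursIn q p I₁ ∧ occursIn q p I₂) ↔
        ((∀ j r, q j < q r ↔ F p (u₁ j) < F p (u₁ r)) ∧
         (∀ j r, q j < q r ↔ F p (u₂ j) < F p (u₂ r))) := by
    intro p
    rw [occursIn_iff q p I₁ h₁, occursIn_iff q p I₂ h₂]
    constructor
    · rintro ⟨hA, hB⟩
      constructor
      · intro j r
        rw [hA j r, pattPerm_apply, pattPerm_apply, patt_lt_iff, hembu₁, hembu₁]
      · intro j r
        rw [hB j r, pattPerm_apply, pattPerm_apply, patt_lt_iff, hembu₂, hembu₂]
    · rintro ⟨hA, hB⟩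
      constructor
      · intro j r
        rw [hA j r, pattPerm_apply, pattPerm_apply, patt_lt_iff, hembu₁, hembu₁]
      · intro j r
        rw [hB j r, pattPerm_apply, pattPerm_apply, patt_lt_iff, hembu₂, hembu₂]
  -- fiber counting
  set c := (univ.filter fun p : Equiv.Perm (Fin n) => F p = 1).card with hc'
  have hfib : ∀ σ, (univ.filter fun p : Equiv.Perm (Fin n) => F p = σ).card = c :=
    fun σ => card_fiber_pattPerm J hJ σ
  have htot : n.factorial = (2 * k - 1).factorial * c := by
    have h0 : (univ : Finset (Equiv.Perm (Fin n))).card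
        = ∑ σ ∈ (univ : Finset (Equiv.Perm (Fin (2 * k - 1)))),
            (univ.filter fun p : Equiv.Perm (Fin n) => F p = σ).card :=
      Finset.card_eq_sum_card_fiberwise (fun p _ => mem_univ (F p))
    simp only [hfib, Finset.sum_const, smul_eq_mul, Finset.card_univ, Fintype.card_perm,
      Fintype.card_fin] at h0
    exact h0
  have hGoodcard := card_good hk rfl q u₁ u₂ hu₁inj hu₂inj hcov m₁ m₂ hcm hinter
  have hE : (univ.filter fun p : Equiv.Perm (Fin n) =>
      occursIn q p I₁ ∧ occursIn q p I₂)
      = univ.filter (fun p : Equiv.Perm (Fin n) =>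
          (∀ j r, q j < q r ↔ F p (u₁ j) < F p (u₁ r)) ∧
          (∀ j r, q j < q r ↔ F p (u₂ j) < F p (u₂ r))) := by
    apply Finset.filter_congr
    intro p _
    exact hEcond p
  have hEcard : (univ.filter fun p : Equiv.Perm (Fin n) =>
      occursIn q p I₁ ∧ occursIn q p I₂).card
      = (univ.filter fun σ : Equiv.Perm (Fin (2 * k - 1)) =>
          (∀ j r, q j < q r ↔ σ (u₁ j) < σ (u₁ r)) ∧
          (∀ j r, q j < q r ↔ σ (u₂ j) < σ (u₂ r))).card * c := by
    rw [hE]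
    have h0 : (univ.filter (fun p : Equiv.Perm (Fin n) =>
          (∀ j r, q j < q r ↔ F p (u₁ j) < F p (u₁ r)) ∧
          (∀ j r, q j < q r ↔ F p (u₂ j) < F p (u₂ r)))).card
        = ∑ σ ∈ (univ.filter fun σ : Equiv.Perm (Fin (2 * k - 1)) =>
            (∀ j r, q j < q r ↔ σ (u₁ j) < σ (u₁ r)) ∧
            (∀ j r, q j < q r ↔ σ (u₂ j) < σ (u₂ r))),
            ((univ.filter (fun p : Equiv.Perm (Fin n) =>
              (∀ j r, q j < q r ↔ F p (u₁ j) < F p (u₁ r)) ∧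
              (∀ j r, q j < q r ↔ F p (u₂ j) < F p (u₂ r)))).filter
                (fun p => F p = σ)).card := by
      apply Finset.card_eq_sum_card_fiberwise
      intro p hp
      simp only [Finset.mem_coe, mem_filter, mem_univ, true_and] at hp ⊢
      exact hp
    rw [h0]
    rw [Finset.sum_congr rfl (fun σ hσ => ?_), Finset.sum_const, smul_eq_mul]
    have hRσ : (∀ j r, q j < q r ↔ σ (u₁ j) < σ (u₁ r)) ∧
        (∀ j r, q j < q r ↔ σ (u₂ j) < σ (u₂ r)) := by
      simpa using hσ
    have heq : ((univ.filter (fun p : Equiv.Perm (Fin n) =>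
        (∀ j r, q j < q r ↔ F p (u₁ j) < F p (u₁ r)) ∧
        (∀ j r, q j < q r ↔ F p (u₂ j) < F p (u₂ r)))).filter
          (fun p => F p = σ))
        = univ.filter (fun p : Equiv.Perm (Fin n) => F p = σ) := by
      ext p
      simp only [mem_filter, mem_univ, true_and]
      constructor
      · rintro ⟨_, h⟩; exact h
      · intro h
        refine ⟨?_, h⟩
        rw [h]
        exact hRσ
    rw [heq, hfib σ]
  -- final computation
  have hc0 : c ≠ 0 := by
    intro h
    rw [h, Nat.mul_zero] at htot
    exact (Nat.factorial_pos n).ne' htot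
  have hfact0 : ((2 * k - 1).factorial : ℝ) ≠ 0 := by
    exact_mod_cast (Nat.factorial_pos _).ne'
  have hcR : (c : ℝ) ≠ 0 := Nat.cast_ne_zero.mpr hc0
  have hab2 : a + b - 2 = α + β := by omega
  have ha1 : a - 1 = α := by omega
  have h2kab : 2 * k - a - b = 2 * k - 2 - α - β := by omega
  have hka : k - a = k - 1 - α := by omega
  have key : ∀ (X Y F C : ℝ), C ≠ 0 → F ≠ 0 → (X * Y * C) / (F * C) = 1 / F * X * Y := by
    intro X Y F C hC hF
    field_simp
  rw [hab2, ha1, h2kab, hka, hEcard, hGoodcard, htot, Nat.cast_mul, Nat.cast_mul,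
    Nat.cast_mul]
  exact key _ _ _ _ hcR hfact0
end

section
/- For every positive integer k, Σ_{1≤a,b≤k} C(a+b−2, a−1)·C(2k−a−b, k−a) = (2k−1)·C(2k−2, k−1). -/
open Finset

lemma aux0 (n i : ℕ) : ∑ t ∈ range (n+1), t.choose i = (n+1).choose (i+1) := by
  rw [← Nat.sum_Icc_choose n i]
  refine (Finset.sum_subset ?_ ?_).symm
  · intro x hx
    simp only [Finset.mem_Icc, Finset.mem_range] at *
    omega
  · intro x hx hx'
    simp only [Finset.mem_Icc, Finset.mem_range] at *
    exact Nat.choose_eq_zero_of_lt (by omega)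

lemma aux1 (n : ℕ) : ∀ i j : ℕ, ∑ t ∈ range (n+1), t.choose i * (n-t).choose j
    = (n+1).choose (i+j+1) := by
  induction n with
  | zero =>
    intro i j
    simp only [Nat.zero_add, Finset.sum_range_one]
    rcases i with _ | i
    · rcases j with _ | j
      · simp
      · rw [Nat.choose_eq_zero_of_lt (Nat.succ_pos j),
          Nat.choose_eq_zero_of_lt (show 1 < 0 + (j+1) + 1 by omega)]
        ring
    · rw [Nat.choose_eq_zero_of_lt (Nat.succ_pos i),
        Nat.choose_eq_zero_of_lt (show 1 < (i+1) + j + 1 by omega)]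
      ring
  | succ n ih =>
    intro i j
    cases j with
    | zero =>
      simp only [Nat.choose_zero_right, Nat.mul_one, Nat.add_zero]
      exact aux0 (n+1) i
    | succ j =>
      rw [Finset.sum_range_succ]
      have h1 : ∀ t ∈ range (n+1), t.choose i * (n+1-t).choose (j+1)
          = t.choose i * (n-t).choose (j+1) + t.choose i * (n-t).choose j := by
        intro t ht
        simp only [Finset.mem_range] at ht
        have h2 : n + 1 - t = (n - t) + 1 := by omega
        rw [h2, Nat.choose_succ_succ]
        ring
      rw [Finset.sum_congr rfl h1, Finset.sum_add_distrib, ih i (j+1), ih i j]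
      simp only [Nat.sub_self, Nat.choose_eq_zero_of_lt (Nat.succ_pos j), Nat.mul_zero,
        Nat.add_zero]
      have e : i + (j+1) + 1 = (i+j+1) + 1 := by omega
      rw [e, Nat.choose_succ_succ' (n+1) (i+j+1)]
      omega

/-- For every positive integer `k`,
`Σ_{1≤a,b≤k} C(a+b-2, a-1) · C(2k-a-b, k-a) = (2k-1) · C(2k-2, k-1)`. -/
theorem sum_binomial_products (k : ℕ) (hk : 0 < k) :
    ∑ a ∈ Icc 1 k, ∑ b ∈ Icc 1 k,
        (a + b - 2).choose (a - 1) * (2 * k - a - b).choose (k - a)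
      = (2 * k - 1) * (2 * k - 2).choose (k - 1) := by
  have hre : ∀ (f : ℕ → ℕ), ∑ a ∈ Icc 1 k, f a = ∑ i ∈ range k, f (i+1) := by
    intro f
    rw [show Icc 1 k = Ico 1 (k+1) by rw [Finset.Ico_add_one_right_eq_Icc],
      Finset.sum_Ico_eq_sum_range]
    simp [Nat.add_comm 1]
  rw [hre]
  have hinner : ∀ i ∈ range k,
      ∑ b ∈ Icc 1 k, ((i+1) + b - 2).choose ((i+1) - 1) * (2*k - (i+1) - b).choose (k - (i+1))
      = (2*k - 1).choose k := by
    intro i hi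
    simp only [Finset.mem_range] at hi
    rw [hre]
    have hstep : ∀ j ∈ range k,
        ((i+1) + (j+1) - 2).choose ((i+1) - 1) * (2*k - (i+1) - (j+1)).choose (k - (i+1))
        = (i+j).choose i * ((2*k-2) - (i+j)).choose ((k-1) - i) := by
      intro j hj
      have e1 : (i+1) + (j+1) - 2 = i + j := by omega
      have e2 : (i+1) - 1 = i := by omega
      have e3 : 2*k - (i+1) - (j+1) = (2*k-2) - (i+j) := by omega
      have e4 : k - (i+1) = (k-1) - i := by omega
      rw [e1, e2, e3, e4]
    rw [Finset.sum_congr rfl hstep]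
    have hmap : ∑ j ∈ range k, (i+j).choose i * ((2*k-2) - (i+j)).choose ((k-1) - i)
        = ∑ t ∈ Ico i (i+k), t.choose i * ((2*k-2) - t).choose ((k-1) - i) := by
      rw [Finset.sum_Ico_eq_sum_range]
      simp [Nat.add_sub_cancel_left]
    rw [hmap]
    have hext : ∑ t ∈ Ico i (i+k), t.choose i * ((2*k-2) - t).choose ((k-1) - i)
        = ∑ t ∈ range (2*k-2+1), t.choose i * ((2*k-2) - t).choose ((k-1) - i) := by
      refine Finset.sum_subset ?_ ?_
      · intro x hx
        simp only [Finset.mem_Ico, Finset.mem_range] at *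
        omega
      · intro x hx hx'
        simp only [Finset.mem_Ico, Finset.mem_range, not_and, not_le, not_lt] at hx hx'
        rcases Nat.lt_or_ge x i with h | h
        · rw [Nat.choose_eq_zero_of_lt h]; ring
        · have hxk : i + k ≤ x := by omega
          rw [Nat.choose_eq_zero_of_lt (show 2*k-2-x < k-1-i by omega)]
          ring
    rw [hext, aux1]
    congr 1 <;> omega
  rw [Finset.sum_congr rfl hinner, Finset.sum_const, Finset.card_range, smul_eq_mul]
  have h := Nat.add_one_mul_choose_eq (2*k-2) (k-1)
  have e2 : 2*k-2+1 = 2*k-1 := by omega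
  have e3 : k-1+1 = k := by omega
  rw [e2, e3] at h
  rw [h]
  ring
end

section
/- For every integer k ≥ 2, Σ_{1≤a,b≤k} C(a+b−2, a−1)²·C(2k−a−b, k−a)² > ((2k−1)!)²·k²/(k!)⁴; equivalently, the constant c_k = (1/(2k−1)!²)·Σ_{1≤a,b≤k} C(a+b−2, a−1)²·C(2k−a−b, k−a)² − k²/(k!)⁴ is strictly positive. -/
open Finset

/-- Strict Cauchy–Schwarz / power-mean: if two values of `f` on `s` differ,
then `(∑ f)^2 < card s * ∑ f^2`. -/
lemma sq_sum_lt_card_mul_sum_sq {ι : Type*} [DecidableEq ι] {s : Finset ι} {f : ι → ℝ} {p q : ι}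
    (hp : p ∈ s) (hq : q ∈ s) (hne : f p ≠ f q) :
    (∑ i ∈ s, f i) ^ 2 < s.card * ∑ i ∈ s, (f i) ^ 2 := by
  have hpq : p ≠ q := fun h => hne (by rw [h])
  have hcard0 : 0 < s.card := Finset.card_pos.mpr ⟨p, hp⟩
  have hn : (0 : ℝ) < (s.card : ℝ) := by exact_mod_cast hcard0
  set m : ℝ := (∑ i ∈ s, f i) / s.card with hm
  have h1 : ∑ i ∈ s, (f i - m) ^ 2
      = (∑ i ∈ s, (f i) ^ 2) - (2 * m) * (∑ i ∈ s, f i) + s.card * m ^ 2 := by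
    rw [Finset.sum_congr rfl
      (fun i _ => (by ring : (f i - m) ^ 2 = ((f i) ^ 2 - (2 * m) * f i + m ^ 2)))]
    rw [Finset.sum_add_distrib, Finset.sum_sub_distrib, ← Finset.mul_sum,
      Finset.sum_const, nsmul_eq_mul]
  have h2 : (s.card : ℝ) * ∑ i ∈ s, (f i - m) ^ 2
      = s.card * (∑ i ∈ s, (f i) ^ 2) - (∑ i ∈ s, f i) ^ 2 := by
    rw [h1, hm]
    field_simp
    ring
  have hsub : ({p, q} : Finset ι) ⊆ s := by
    intro x hx
    rcases Finset.mem_insert.mp hx with h | h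
    · rwa [h]
    · rw [Finset.mem_singleton.mp h]; exact hq
  have hpos : 0 < (f p - m) ^ 2 + (f q - m) ^ 2 := by
    rcases eq_or_ne (f p) m with h | h
    · have hq0 : f q - m ≠ 0 := by
        intro h2
        exact hne (by rw [h, sub_eq_zero.mp h2])
      have := sq_pos_of_ne_zero hq0
      nlinarith [sq_nonneg (f p - m)]
    · have hp0 : f p - m ≠ 0 := sub_ne_zero.mpr h
      have := sq_pos_of_ne_zero hp0
      nlinarith [sq_nonneg (f q - m)]
  have hle : (f p - m) ^ 2 + (f q - m) ^ 2 ≤ ∑ i ∈ s, (f i - m) ^ 2 := by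
    have := Finset.sum_le_sum_of_subset_of_nonneg hsub
      (fun i _ _ => sq_nonneg (f i - m))
    rwa [Finset.sum_pair hpq] at this
  have hsumpos : 0 < ∑ i ∈ s, (f i - m) ^ 2 := lt_of_lt_of_le hpos hle
  nlinarith [mul_pos hn hsumpos]

/-- The double-sum Vandermonde identity:
`∑_{1≤a,b≤k} C(a+b-2,a-1) C(2k-a-b,k-a) = (2k-1) C(2k-2,k-1)`. -/
lemma double_sum_vandermonde (k : ℕ) (hk : 2 ≤ k) :
    ∑ p ∈ Icc 1 k ×ˢ Icc 1 k,
        (p.1 + p.2 - 2).choose (p.1 - 1) * (2 * k - p.1 - p.2).choose (k - p.1)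
      = (2 * k - 1) * (2 * k - 2).choose (k - 1) := by
  set A : Finset (ℕ × ℕ) := Icc 1 k ×ˢ Icc 1 k with hA
  set B : Finset (ℕ × ℕ) := Icc 2 (2 * k) ×ˢ Icc 1 k with hB
  set φ : ℕ × ℕ → ℕ × ℕ := fun p => (p.1 + p.2, p.1) with hφ
  set h : ℕ × ℕ → ℕ := fun q => (q.1 - 2).choose (q.2 - 1) * (2 * k - q.1).choose (k - q.2)
    with hh
  have hinj : ∀ x ∈ A, ∀ y ∈ A, φ x = φ y → x = y := by
    intro x _ y _ hxy
    simp only [hφ, Prod.mk.injEq] at hxy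
    obtain ⟨h1, h2⟩ := hxy
    exact Prod.ext h2 (by omega)
  have step1 : ∑ p ∈ A, (p.1 + p.2 - 2).choose (p.1 - 1) * (2 * k - p.1 - p.2).choose (k - p.1)
      = ∑ q ∈ A.image φ, h q := by
    rw [Finset.sum_image hinj]
    refine Finset.sum_congr rfl (fun p _ => ?_)
    simp only [hh, hφ]
    rw [Nat.sub_sub]
  have step2 : A.image φ ⊆ B := by
    intro q hq
    obtain ⟨p, hp, hpq⟩ := Finset.mem_image.mp hq
    rw [hA, Finset.mem_product, Finset.mem_Icc, Finset.mem_Icc] at hp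
    rw [hB, Finset.mem_product, Finset.mem_Icc, Finset.mem_Icc]
    simp only [hφ] at hpq
    subst hpq
    omega
  have step3 : ∑ q ∈ A.image φ, h q = ∑ q ∈ B, h q := by
    refine Finset.sum_subset step2 (fun q hqB hqim => ?_)
    by_contra hne0
    apply hqim
    rw [hB, Finset.mem_product, Finset.mem_Icc, Finset.mem_Icc] at hqB
    have h1 : q.2 - 1 ≤ q.1 - 2 := by
      by_contra hl
      push_neg at hl
      exact hne0 (by simp only [hh]; rw [Nat.choose_eq_zero_of_lt hl, zero_mul])
    have h2 : k - q.2 ≤ 2 * k - q.1 := by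
      by_contra hl
      push_neg at hl
      exact hne0 (by simp only [hh]; rw [Nat.choose_eq_zero_of_lt hl, mul_zero])
    refine Finset.mem_image.mpr ⟨(q.2, q.1 - q.2), ?_, ?_⟩
    · rw [hA, Finset.mem_product, Finset.mem_Icc, Finset.mem_Icc]
      omega
    · simp only [hφ]
      exact Prod.ext (by omega) rfl
  have inner : ∀ s ∈ Icc 2 (2 * k),
      ∑ a ∈ Icc 1 k, (s - 2).choose (a - 1) * (2 * k - s).choose (k - a)
        = (2 * k - 2).choose (k - 1) := by
    intro s hs
    rw [Finset.mem_Icc] at hs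
    have hV := Nat.add_choose_eq (s - 2) (2 * k - s) (k - 1)
    rw [Finset.Nat.sum_antidiagonal_eq_sum_range_succ_mk] at hV
    have hm : s - 2 + (2 * k - s) = 2 * k - 2 := by omega
    rw [hm, show (k - 1).succ = k by omega] at hV
    rw [hV, ← Finset.Ico_add_one_right_eq_Icc, Finset.sum_Ico_eq_sum_range]
    refine Finset.sum_congr (by norm_num) (fun i _ => ?_)
    rw [show 1 + i - 1 = i by omega, show k - (1 + i) = k - 1 - i by omega]
  rw [step1, step3, hB, Finset.sum_product]
  rw [Finset.sum_congr rfl (fun s hs => inner s hs), Finset.sum_const, smul_eq_mul,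
    Nat.card_Icc, show 2 * k + 1 - 2 = 2 * k - 1 by omega]

/-- For every integer `k ≥ 2`,
`Σ_{1≤a,b≤k} C(a+b-2, a-1)² · C(2k-a-b, k-a)² > ((2k-1)!)² · k² / (k!)⁴`; equivalently,
the constant
`c_k = (1/(2k-1)!²) · Σ_{1≤a,b≤k} C(a+b-2, a-1)² · C(2k-a-b, k-a)² − k²/(k!)⁴`
is strictly positive. -/
theorem c_k_positive (k : ℕ) (hk : 2 ≤ k) :
    (((2 * k - 1).factorial : ℝ) ^ 2 * (k : ℝ) ^ 2 / (k.factorial : ℝ) ^ 4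
        < ∑ a ∈ Icc 1 k, ∑ b ∈ Icc 1 k,
            ((a + b - 2).choose (a - 1) : ℝ) ^ 2 * ((2 * k - a - b).choose (k - a) : ℝ) ^ 2)
      ∧ 0 < (1 / ((2 * k - 1).factorial : ℝ) ^ 2) *
            (∑ a ∈ Icc 1 k, ∑ b ∈ Icc 1 k,
              ((a + b - 2).choose (a - 1) : ℝ) ^ 2 *
                ((2 * k - a - b).choose (k - a) : ℝ) ^ 2)
          - (k : ℝ) ^ 2 / (k.factorial : ℝ) ^ 4 := by
  set f : ℕ × ℕ → ℝ := fun p =>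
    (((p.1 + p.2 - 2).choose (p.1 - 1) : ℕ) : ℝ) * (((2 * k - p.1 - p.2).choose (k - p.1) : ℕ) : ℝ)
    with hf
  set A : Finset (ℕ × ℕ) := Icc 1 k ×ˢ Icc 1 k with hA
  -- the goal sum equals ∑ p ∈ A, (f p)^2
  have hS : (∑ a ∈ Icc 1 k, ∑ b ∈ Icc 1 k,
        ((a + b - 2).choose (a - 1) : ℝ) ^ 2 * ((2 * k - a - b).choose (k - a) : ℝ) ^ 2)
      = ∑ p ∈ A, (f p) ^ 2 := by
    rw [hA, Finset.sum_product]
    exact Finset.sum_congr rfl (fun a _ => Finset.sum_congr rfl (fun b _ => by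
      simp only [hf]; ring))
  -- sum of f over A
  have hsum : ∑ p ∈ A, f p = (k : ℝ) * ((2 * k - 1).choose k : ℝ) := by
    have h1 : ∑ p ∈ A, f p
        = ((∑ p ∈ A, (p.1 + p.2 - 2).choose (p.1 - 1) * (2 * k - p.1 - p.2).choose (k - p.1) : ℕ) : ℝ) := by
      push_cast
      rfl
    have h2 := double_sum_vandermonde k hk
    have h3 : k * ((2 * k - 1).choose k) = (2 * k - 1) * (2 * k - 2).choose (k - 1) := by
      have := Nat.add_one_mul_choose_eq (2 * k - 2) (k - 1)
      rw [show 2 * k - 2 + 1 = 2 * k - 1 by omega, show k - 1 + 1 = k by omega] at this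
      rw [this]
      exact Nat.mul_comm _ _
    rw [h1, hA, h2, ← h3]
    push_cast
    ring
  -- witnesses for strictness
  have hp : ((1, 1) : ℕ × ℕ) ∈ A := by
    simp only [hA, Finset.mem_product, Finset.mem_Icc]; omega
  have hq : ((1, 2) : ℕ × ℕ) ∈ A := by
    simp only [hA, Finset.mem_product, Finset.mem_Icc]; omega
  have hne : f (1, 1) ≠ f (1, 2) := by
    have e1 : f (1, 1) = ((2 * k - 2).choose (k - 1) : ℝ) := by
      simp only [hf]
      norm_num [show 2 * k - 1 - 1 = 2 * k - 2 by omega]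
    have e2 : f (1, 2) = ((2 * k - 3).choose (k - 1) : ℝ) := by
      simp only [hf]
      norm_num [show 2 * k - 1 - 2 = 2 * k - 3 by omega]
    rw [e1, e2]
    have hlt : (2 * k - 3).choose (k - 1) < (2 * k - 2).choose (k - 1) := by
      have hrec : (2 * k - 2).choose (k - 1)
          = (2 * k - 3).choose (k - 2) + (2 * k - 3).choose (k - 1) := by
        rw [show 2 * k - 2 = (2 * k - 3) + 1 by omega, show k - 1 = (k - 2) + 1 by omega]
        exact Nat.choose_succ_succ _ _
      have hpos : 0 < (2 * k - 3).choose (k - 2) :=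
        Nat.choose_pos (by omega)
      omega
    exact_mod_cast hlt.ne'
  have hcard : (A.card : ℝ) = (k : ℝ) ^ 2 := by
    rw [hA, Finset.card_product, Nat.card_Icc]
    push_cast [show k + 1 - 1 = k by omega]
    ring
  have hCS := sq_sum_lt_card_mul_sum_sq hp hq hne
  rw [hsum, hcard] at hCS
  have hk0 : (0 : ℝ) < (k : ℝ) ^ 2 := by positivity
  have hmain : ((2 * k - 1).choose k : ℝ) ^ 2 < ∑ p ∈ A, (f p) ^ 2 := by
    nlinarith [hCS]
  -- the RHS constant equals C(2k-1,k)^2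
  have hkle : k ≤ 2 * k - 1 := by omega
  have hfact : (2 * k - 1).choose k * k.factorial * (k - 1).factorial
      = (2 * k - 1).factorial := by
    have := Nat.choose_mul_factorial_mul_factorial hkle
    rwa [show 2 * k - 1 - k = k - 1 by omega] at this
  have hkf : k.factorial = k * (k - 1).factorial := by
    rw [show k = (k - 1) + 1 by omega, Nat.factorial_succ]
    congr 1 <;> omega
  have hid : ((2 * k - 1).factorial : ℝ) * (k : ℝ)
      = ((2 * k - 1).choose k : ℝ) * (k.factorial : ℝ) * (k.factorial : ℝ) := by
    have : (2 * k - 1).factorial * k = (2 * k - 1).choose k * k.factorial * k.factorial := by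
      calc (2 * k - 1).factorial * k
          = (2 * k - 1).choose k * k.factorial * (k - 1).factorial * k := by rw [hfact]
        _ = (2 * k - 1).choose k * k.factorial * (k * (k - 1).factorial) := by ring
        _ = (2 * k - 1).choose k * k.factorial * k.factorial := by rw [← hkf]
    exact_mod_cast this
  have hfne : (k.factorial : ℝ) ≠ 0 := by positivity
  have hconst : ((2 * k - 1).factorial : ℝ) ^ 2 * (k : ℝ) ^ 2 / (k.factorial : ℝ) ^ 4
      = ((2 * k - 1).choose k : ℝ) ^ 2 := by
    field_simp
    linear_combination (((2 * k - 1).factorial : ℝ) * (k : ℝ)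
      + ((2 * k - 1).choose k : ℝ) * (k.factorial : ℝ) * (k.factorial : ℝ)) * hid
  have hfirst : ((2 * k - 1).factorial : ℝ) ^ 2 * (k : ℝ) ^ 2 / (k.factorial : ℝ) ^ 4
      < ∑ a ∈ Icc 1 k, ∑ b ∈ Icc 1 k,
          ((a + b - 2).choose (a - 1) : ℝ) ^ 2 * ((2 * k - a - b).choose (k - a) : ℝ) ^ 2 := by
    rw [hconst, hS]
    exact hmain
  refine ⟨hfirst, ?_⟩
  have hF : (0 : ℝ) < ((2 * k - 1).factorial : ℝ) ^ 2 := by positivity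
  rw [sub_pos]
  calc (k : ℝ) ^ 2 / (k.factorial : ℝ) ^ 4
      < (∑ a ∈ Icc 1 k, ∑ b ∈ Icc 1 k,
          ((a + b - 2).choose (a - 1) : ℝ) ^ 2 * ((2 * k - a - b).choose (k - a) : ℝ) ^ 2)
        / ((2 * k - 1).factorial : ℝ) ^ 2 := by
        rw [lt_div_iff₀ hF]
        have heq : (k : ℝ) ^ 2 / (k.factorial : ℝ) ^ 4 * ((2 * k - 1).factorial : ℝ) ^ 2
            = ((2 * k - 1).factorial : ℝ) ^ 2 * (k : ℝ) ^ 2 / (k.factorial : ℝ) ^ 4 := by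
          ring
        rw [heq]
        exact hfirst
    _ = (1 / ((2 * k - 1).factorial : ℝ) ^ 2) *
          (∑ a ∈ Icc 1 k, ∑ b ∈ Icc 1 k,
            ((a + b - 2).choose (a - 1) : ℝ) ^ 2 *
              ((2 * k - a - b).choose (k - a) : ℝ) ^ 2) := by ring
end
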